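/- arXiv:1708.01152 — 2 statements merged into one kernel-verified Lean document; each statement's English description precedes it below -/
import Mathlib

section
/- Let d ≥ 1, M ≥ 0, N₀ ∈ ℕ ∪ {0}, let x ∈ ℝ^d with ‖x‖ > N₀, let A = (a_ij)_{1≤i,j≤d} be a symmetric real d×d matrix and g ∈ ℝ^d, and suppose that ( ‖x‖/(‖x‖−N₀) − 1/2 − 3(‖x‖−N₀)²‖x‖ / (2((‖x‖−N₀)³ + 1)) )·⟨Ax, x⟩/‖x‖² + (1/2)·trace(A) + ⟨g, x⟩ ≤ M·( (‖x‖−N₀) + 1/(‖x‖−N₀)² )·‖x‖·( ln((‖x‖−N₀)³ + 1) + 1 ). Define f(y) := ln((‖y‖−N₀)³ + 1) + 1 for ‖y‖ > N₀. Then f is twice continuously differentiable on {y ∈ ℝ^d : ‖y‖ > N₀} and at the point x one has (1/2)·Σ_{i,j=1}^d a_ij ∂_i∂_j f(x) + ⟨g, ∇f(x)⟩ ≤ 3M·f(x). -/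
open Real


/-- The i-th partial derivative `∂ᵢ u (x)`. -/
noncomputable def pd {d : ℕ} (u : EuclideanSpace ℝ (Fin d) → ℝ) (i : Fin d)
    (x : EuclideanSpace ℝ (Fin d)) : ℝ :=
  fderiv ℝ u x (EuclideanSpace.single i 1)

/-- The second partial derivative `∂ᵢ∂ⱼ u (x)`. -/
noncomputable def pd2 {d : ℕ} (u : EuclideanSpace ℝ (Fin d) → ℝ) (i j : Fin d)
    (x : EuclideanSpace ℝ (Fin d)) : ℝ :=
  pd (fun y => pd u j y) i x

lemma hasFDerivAt_norm' {E : Type*} [NormedAddCommGroup E] [InnerProductSpace ℝ E]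
    {x : E} (hx : x ≠ 0) :
    HasFDerivAt (fun y : E => ‖y‖) (‖x‖⁻¹ • innerSL ℝ x) x := by
  have h1 : HasFDerivAt (fun y : E => ‖y‖ ^ 2) (2 • innerSL ℝ x) x :=
    (hasStrictFDerivAt_norm_sq x).hasFDerivAt
  have h2 : HasDerivAt Real.sqrt (1 / (2 * Real.sqrt (‖x‖ ^ 2))) (‖x‖ ^ 2) := by
    apply Real.hasDerivAt_sqrt
    exact pow_ne_zero _ (norm_ne_zero_iff.mpr hx)
  have := h2.comp_hasFDerivAt x h1
  have hn : Real.sqrt (‖x‖ ^ 2) = ‖x‖ := Real.sqrt_sq (norm_nonneg x)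
  convert this using 1
  · rfl
  · rfl
  · ext y
    simp [Real.sqrt_sq (norm_nonneg _)]
  · rw [hn]
    ext v
    simp [ContinuousLinearMap.smul_apply]
    field_simp

lemma hasFDerivAt_comp_norm {E : Type*} [NormedAddCommGroup E] [InnerProductSpace ℝ E]
    {x : E} (hx : x ≠ 0) {φ : ℝ → ℝ} {φ' : ℝ} (hφ : HasDerivAt φ φ' ‖x‖) :
    HasFDerivAt (fun y : E => φ ‖y‖) ((φ' / ‖x‖) • innerSL ℝ x) x := by
  have := hφ.comp_hasFDerivAt x (hasFDerivAt_norm' hx)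
  convert this using 1
  · rfl
  · rfl
  · rfl
  rw [smul_smul, div_eq_mul_inv]

lemma hasDerivAt_phi (c : ℝ) {r : ℝ} (hr : c < r) :
    HasDerivAt (fun t : ℝ => Real.log ((t - c) ^ 3 + 1) + 1)
      (3 * (r - c) ^ 2 / ((r - c) ^ 3 + 1)) r := by
  have hs : (0:ℝ) < r - c := sub_pos.mpr hr
  have hpos : (0:ℝ) < (r - c) ^ 3 + 1 := by nlinarith [pow_pos hs 3]
  have h1 : HasDerivAt (fun t : ℝ => (t - c) ^ 3 + 1) (3 * (r - c) ^ 2) r := by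
    have := (((hasDerivAt_id r).sub_const c).pow 3)
    simpa using this.add_const 1
  have := (h1.log hpos.ne')
  convert this.add_const 1 using 1

/-- derivative of `G₀ t = 3(t-c)²/(((t-c)³+1) t)` -/
lemma hasDerivAt_G0 (c : ℝ) {r : ℝ} (hr : c < r) (hr0 : 0 < r) :
    HasDerivAt (fun t : ℝ => 3 * (t - c) ^ 2 / (((t - c) ^ 3 + 1) * t))
      ((6 * (r - c) * (((r - c) ^ 3 + 1) * r)
          - 3 * (r - c) ^ 2 * (3 * (r - c) ^ 2 * r + ((r - c) ^ 3 + 1)))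
        / ((((r - c) ^ 3 + 1) * r) ^ 2)) r := by
  have hs : (0:ℝ) < r - c := sub_pos.mpr hr
  have hpos : (0:ℝ) < (r - c) ^ 3 + 1 := by nlinarith [pow_pos hs 3]
  have hnum : HasDerivAt (fun t : ℝ => 3 * (t - c) ^ 2) (6 * (r - c)) r := by
    have := (((hasDerivAt_id r).sub_const c).pow 2).const_mul 3
    convert this using 1
    · rfl
    · rfl
    · rfl
    simp only [id_eq]; ring
  have hden : HasDerivAt (fun t : ℝ => ((t - c) ^ 3 + 1) * t)
      (3 * (r - c) ^ 2 * r + ((r - c) ^ 3 + 1)) r := by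
    have h1 : HasDerivAt (fun t : ℝ => (t - c) ^ 3 + 1) (3 * (r - c) ^ 2) r := by
      have := (((hasDerivAt_id r).sub_const c).pow 3)
      simpa using this.add_const 1
    have := h1.mul (hasDerivAt_id r)
    convert this using 1
    · rfl
    · rfl
    · rfl
    simp only [id_eq]; ring
  have := hnum.div hden (by positivity)
  convert this using 1
  · rfl
  · rfl
  · rfl

lemma pd_f {d : ℕ} (c : ℝ) (hc : 0 ≤ c) {y : EuclideanSpace ℝ (Fin d)}
    (hy : c < ‖y‖) (j : Fin d) :
    pd (fun z : EuclideanSpace ℝ (Fin d) => Real.log ((‖z‖ - c) ^ 3 + 1) + 1) j y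
      = 3 * (‖y‖ - c) ^ 2 / (((‖y‖ - c) ^ 3 + 1) * ‖y‖) * y j := by
  have hy0 : y ≠ 0 := by
    intro h; rw [h] at hy; simp at hy; linarith
  have H := hasFDerivAt_comp_norm hy0 (hasDerivAt_phi c hy)
  unfold pd
  rw [H.fderiv]
  simp [ContinuousLinearMap.smul_apply, EuclideanSpace.inner_single_right, div_div]

lemma pd2_f {d : ℕ} (c : ℝ) (hc : 0 ≤ c) {x : EuclideanSpace ℝ (Fin d)}
    (hx : c < ‖x‖) (i j : Fin d) :
    pd2 (fun z : EuclideanSpace ℝ (Fin d) => Real.log ((‖z‖ - c) ^ 3 + 1) + 1) i j x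
      = ((6 * (‖x‖ - c) * (((‖x‖ - c) ^ 3 + 1) * ‖x‖)
          - 3 * (‖x‖ - c) ^ 2 * (3 * (‖x‖ - c) ^ 2 * ‖x‖ + ((‖x‖ - c) ^ 3 + 1)))
        / ((((‖x‖ - c) ^ 3 + 1) * ‖x‖) ^ 2)) / ‖x‖ * x i * x j
        + 3 * (‖x‖ - c) ^ 2 / (((‖x‖ - c) ^ 3 + 1) * ‖x‖) * (if j = i then (1:ℝ) else 0) := by
  have hr0 : (0:ℝ) < ‖x‖ := lt_of_le_of_lt hc hx
  have hx0 : x ≠ 0 := by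
    intro h; rw [h] at hr0; simp at hr0
  have hU : IsOpen {y : EuclideanSpace ℝ (Fin d) | c < ‖y‖} :=
    isOpen_lt continuous_const continuous_norm
  have heq : (fun y : EuclideanSpace ℝ (Fin d) =>
        pd (fun z : EuclideanSpace ℝ (Fin d) => Real.log ((‖z‖ - c) ^ 3 + 1) + 1) j y)
      =ᶠ[nhds x] (fun y => 3 * (‖y‖ - c) ^ 2 / (((‖y‖ - c) ^ 3 + 1) * ‖y‖) * y j) := by
    filter_upwards [hU.mem_nhds hx] with y hy
    exact pd_f c hc hy j
  have hG : HasFDerivAt (fun y : EuclideanSpace ℝ (Fin d) =>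
        3 * (‖y‖ - c) ^ 2 / (((‖y‖ - c) ^ 3 + 1) * ‖y‖))
      ((((6 * (‖x‖ - c) * (((‖x‖ - c) ^ 3 + 1) * ‖x‖)
          - 3 * (‖x‖ - c) ^ 2 * (3 * (‖x‖ - c) ^ 2 * ‖x‖ + ((‖x‖ - c) ^ 3 + 1)))
        / ((((‖x‖ - c) ^ 3 + 1) * ‖x‖) ^ 2)) / ‖x‖) • innerSL ℝ x) x :=
    hasFDerivAt_comp_norm hx0 (hasDerivAt_G0 c hx hr0)
  have hj : HasFDerivAt (fun y : EuclideanSpace ℝ (Fin d) => y j)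
      (EuclideanSpace.proj j : EuclideanSpace ℝ (Fin d) →L[ℝ] ℝ) x := by
    have := (EuclideanSpace.proj j : EuclideanSpace ℝ (Fin d) →L[ℝ] ℝ).hasFDerivAt (x := x)
    convert this using 1
    rfl
  have H : HasFDerivAt (fun y : EuclideanSpace ℝ (Fin d) =>
      3 * (‖y‖ - c) ^ 2 / (((‖y‖ - c) ^ 3 + 1) * ‖y‖) * y j) _ x := hG.mul hj
  have hrfl : pd2 (fun z : EuclideanSpace ℝ (Fin d) => Real.log ((‖z‖ - c) ^ 3 + 1) + 1) i j x
      = fderiv ℝ (fun y => pd (fun z : EuclideanSpace ℝ (Fin d) =>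
          Real.log ((‖z‖ - c) ^ 3 + 1) + 1) j y) x (EuclideanSpace.single i 1) := rfl
  rw [hrfl, heq.fderiv_eq, H.fderiv]
  simp [ContinuousLinearMap.smul_apply, EuclideanSpace.inner_single_right]
  ring

lemma contDiffOn_f {d : ℕ} (c : ℝ) (hc : 0 ≤ c) :
    ContDiffOn ℝ 2 (fun y : EuclideanSpace ℝ (Fin d) => Real.log ((‖y‖ - c) ^ 3 + 1) + 1)
      {y : EuclideanSpace ℝ (Fin d) | c < ‖y‖} := by
  intro y hy
  simp only [Set.mem_setOf_eq] at hy
  have hy0 : y ≠ 0 := by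
    intro h; rw [h] at hy; simp at hy; linarith
  have hs : (0:ℝ) < ‖y‖ - c := sub_pos.mpr hy
  have hpos : (0:ℝ) < (‖y‖ - c) ^ 3 + 1 := by nlinarith [pow_pos hs 3]
  have h1 : ContDiffAt ℝ 2 (fun t : ℝ => Real.log ((t - c) ^ 3 + 1) + 1) ‖y‖ := by
    have hinner : ContDiffAt ℝ 2 (fun t : ℝ => (t - c) ^ 3 + 1) ‖y‖ :=
      (((contDiff_id.sub contDiff_const).pow 3).add contDiff_const).contDiffAt
    exact (hinner.log hpos.ne').add contDiffAt_const
  exact ((h1.comp y (contDiffAt_norm ℝ hy0)).contDiffWithinAt)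

/-- the pointwise computation behind the second non-explosion criterion
(growth condition only outside the ball of radius `N₀`): with
`f(y) = ln((‖y‖−N₀)³+1)+1`, `f` is C² on `{‖y‖ > N₀}` and
`(1/2)Σᵢⱼ aᵢⱼ ∂ᵢ∂ⱼ f(x) + ⟨g,∇f(x)⟩ ≤ 3M f(x)`. -/
theorem stmt_6 (d : ℕ) (hd : 1 ≤ d) (M : ℝ) (hM : 0 ≤ M) (N₀ : ℕ)
    (x : EuclideanSpace ℝ (Fin d)) (hx : (N₀ : ℝ) < ‖x‖)
    (A : Matrix (Fin d) (Fin d) ℝ) (hA : A.IsSymm)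
    (g : EuclideanSpace ℝ (Fin d))
    (hgrowth :
      (‖x‖ / (‖x‖ - N₀) - 1 / 2
          - 3 * (‖x‖ - N₀) ^ 2 * ‖x‖ / (2 * ((‖x‖ - N₀) ^ 3 + 1)))
            * ((∑ i, (∑ j, A i j * x j) * x i) / ‖x‖ ^ 2)
        + (1 / 2) * Matrix.trace A + (∑ i, g i * x i)
        ≤ M * ((‖x‖ - N₀) + 1 / (‖x‖ - N₀) ^ 2) * ‖x‖
            * (Real.log ((‖x‖ - N₀) ^ 3 + 1) + 1)) :
    ContDiffOn ℝ 2
        (fun y : EuclideanSpace ℝ (Fin d) => Real.log ((‖y‖ - N₀) ^ 3 + 1) + 1)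
        {y : EuclideanSpace ℝ (Fin d) | (N₀ : ℝ) < ‖y‖} ∧
    (1 / 2) * (∑ i, ∑ j, A i j *
          pd2 (fun y : EuclideanSpace ℝ (Fin d) => Real.log ((‖y‖ - N₀) ^ 3 + 1) + 1) i j x)
      + (∑ i, g i *
          pd (fun y : EuclideanSpace ℝ (Fin d) => Real.log ((‖y‖ - N₀) ^ 3 + 1) + 1) i x)
      ≤ 3 * M * (Real.log ((‖x‖ - N₀) ^ 3 + 1) + 1) := by
  have hc : (0:ℝ) ≤ (N₀ : ℝ) := Nat.cast_nonneg _
  refine ⟨contDiffOn_f _ hc, ?_⟩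
  set c : ℝ := (N₀ : ℝ) with hcdef
  set r : ℝ := ‖x‖ with hrdef
  have hr0 : (0:ℝ) < r := lt_of_le_of_lt hc hx
  have hs : (0:ℝ) < r - c := sub_pos.mpr hx
  have hp : (0:ℝ) < (r - c) ^ 3 + 1 := by nlinarith [pow_pos hs 3]
  set D : ℝ := (6 * (r - c) * (((r - c) ^ 3 + 1) * r)
          - 3 * (r - c) ^ 2 * (3 * (r - c) ^ 2 * r + ((r - c) ^ 3 + 1)))
        / ((((r - c) ^ 3 + 1) * r) ^ 2) with hDdef
  set G0 : ℝ := 3 * (r - c) ^ 2 / (((r - c) ^ 3 + 1) * r) with hG0def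
  set Q : ℝ := ∑ i, (∑ j, A i j * x j) * x i with hQdef
  set T : ℝ := Matrix.trace A with hTdef
  set Gx : ℝ := ∑ i, g i * x i with hGxdef
  set L : ℝ := Real.log ((r - c) ^ 3 + 1) + 1 with hLdef
  have hS2 : (∑ i, ∑ j, A i j *
        pd2 (fun y : EuclideanSpace ℝ (Fin d) => Real.log ((‖y‖ - c) ^ 3 + 1) + 1) i j x)
      = (D / r) * Q + G0 * T := by
    have : ∀ i j, pd2 (fun y : EuclideanSpace ℝ (Fin d) =>
          Real.log ((‖y‖ - c) ^ 3 + 1) + 1) i j x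
        = D / r * x i * x j + G0 * (if j = i then (1:ℝ) else 0) :=
      fun i j => pd2_f c hc hx i j
    simp only [this, mul_add, Finset.sum_add_distrib, mul_ite, mul_one, mul_zero,
      Finset.sum_ite_eq', Finset.mem_univ, if_true]
    congr 1
    · rw [hQdef, Finset.mul_sum]
      congr 1; ext i
      rw [Finset.sum_mul, Finset.mul_sum]
      congr 1; ext j
      ring
    · rw [hTdef, Matrix.trace, Finset.mul_sum]
      congr 1; ext i
      rw [Matrix.diag]
      ring
  have hS1 : (∑ i, g i *
        pd (fun y : EuclideanSpace ℝ (Fin d) => Real.log ((‖y‖ - c) ^ 3 + 1) + 1) i x)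
      = G0 * Gx := by
    have : ∀ i, pd (fun y : EuclideanSpace ℝ (Fin d) =>
          Real.log ((‖y‖ - c) ^ 3 + 1) + 1) i x = G0 * x i :=
      fun i => pd_f c hc hx i
    simp only [this]
    rw [hGxdef, Finset.mul_sum]
    congr 1; ext i; ring
  rw [hS2, hS1]
  have hG0pos : 0 < G0 := by
    rw [hG0def]; positivity
  have key1 : (1/2 : ℝ) * ((D / r) * Q + G0 * T) + G0 * Gx
      = G0 * ((r / (r - c) - 1 / 2 - 3 * (r - c) ^ 2 * r / (2 * ((r - c) ^ 3 + 1)))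
          * (Q / r ^ 2) + (1 / 2) * T + Gx) := by
    rw [hDdef, hG0def]
    field_simp
    ring
  have key2 : G0 * (M * ((r - c) + 1 / (r - c) ^ 2) * r * L) = 3 * M * L := by
    rw [hG0def]
    field_simp
  calc (1/2 : ℝ) * ((D / r) * Q + G0 * T) + G0 * Gx
      = G0 * ((r / (r - c) - 1 / 2 - 3 * (r - c) ^ 2 * r / (2 * ((r - c) ^ 3 + 1)))
          * (Q / r ^ 2) + (1 / 2) * T + Gx) := key1
    _ ≤ G0 * (M * ((r - c) + 1 / (r - c) ^ 2) * r * L) :=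
        mul_le_mul_of_nonneg_left hgrowth hG0pos.le
    _ = 3 * M * L := key2
end

section
/- Let (Ω, 𝓕, (𝓕_t)_{t≥0}, P) be a filtered probability space, let x ∈ ℝ^d, let M ≥ 0, and let X : [0,∞) × Ω → ℝ^d be an (𝓕_t)-adapted process with continuous sample paths and X_0 = x almost surely. Define f : ℝ^d → ℝ by f(y) := ln(1 + ‖y‖²) + 1, and for n ∈ ℕ let τ_n := inf{ t ≥ 0 : ‖X_t‖ ≥ n } (with inf ∅ := ∞). Assume that for every n ∈ ℕ with n > ‖x‖ the stopped, exponentially discounted process ( e^{−M·(t ∧ τ_n)}·f(X_{t ∧ τ_n}) )_{t ≥ 0} is an (𝓕_t)-supermartingale. Then for every t ≥ 0 and every n ∈ ℕ with n > ‖x‖ one has P(τ_n ≤ t) ≤ e^{Mt}·( ln(1 + ‖x‖²) + 1 ) / ( ln(1 + n²) + 1 ); in particular, almost surely lim_{n→∞} τ_n = ∞, i.e. P( sup_n τ_n = ∞ ) = 1. -/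
open MeasureTheory Filter
open scoped NNReal ENNReal Topology

/-- Auxiliary: if the hitting time (as an `sInf` in `ℝ≥0∞`) is at most `t`, then the
infimum is attained at some `s ≤ t` with `n ≤ ‖X s ω‖`. -/
private lemma stmt7_hit {d : ℕ} {Ω : Type*}
    (X : ℝ≥0 → Ω → EuclideanSpace ℝ (Fin d)) (ω : Ω)
    (hc : Continuous fun t => X t ω) (n : ℕ) {t : ℝ≥0}
    (h : sInf {s : ℝ≥0∞ | ∃ u : ℝ≥0, s = (u : ℝ≥0∞) ∧ (n : ℝ) ≤ ‖X u ω‖} ≤ (t : ℝ≥0∞)) :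
    ∃ s : ℝ≥0, s ≤ t ∧ (n : ℝ) ≤ ‖X s ω‖ ∧
      sInf {s : ℝ≥0∞ | ∃ u : ℝ≥0, s = (u : ℝ≥0∞) ∧ (n : ℝ) ≤ ‖X u ω‖} = (s : ℝ≥0∞) := by
  set A : Set ℝ≥0 := {u : ℝ≥0 | (n : ℝ) ≤ ‖X u ω‖} with hA
  have hS : {s : ℝ≥0∞ | ∃ u : ℝ≥0, s = (u : ℝ≥0∞) ∧ (n : ℝ) ≤ ‖X u ω‖}
      = (fun u : ℝ≥0 => (u : ℝ≥0∞)) '' A := by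
    ext s
    constructor
    · rintro ⟨u, rfl, hu⟩; exact ⟨u, hu, rfl⟩
    · rintro ⟨u, hu, rfl⟩; exact ⟨u, rfl, hu⟩
  have hAne : A.Nonempty := by
    by_contra hne
    rw [Set.not_nonempty_iff_eq_empty] at hne
    rw [hS, hne, Set.image_empty, sInf_empty] at h
    simp at h
  have hcoe : sInf {s : ℝ≥0∞ | ∃ u : ℝ≥0, s = (u : ℝ≥0∞) ∧ (n : ℝ) ≤ ‖X u ω‖}
      = ((sInf A : ℝ≥0) : ℝ≥0∞) := by
    rw [hS, sInf_image]
    exact (ENNReal.coe_sInf hAne).symm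
  have hclosed : IsClosed A := isClosed_le continuous_const (hc.norm)
  have hmem : sInf A ∈ A := hclosed.csInf_mem hAne (OrderBot.bddBelow A)
  refine ⟨sInf A, ?_, hmem, hcoe⟩
  rw [hcoe] at h
  exact_mod_cast h

/-- supermartingale estimate for the exit times of a continuous adapted
process, and the resulting non-explosion `P(sup_n τ_n = ∞) = 1`. -/
theorem stmt_7 (d : ℕ) (hd : 1 ≤ d)
    {Ω : Type*} {m0 : MeasurableSpace Ω} (P : Measure Ω) [IsProbabilityMeasure P]
    (ℱ : Filtration ℝ≥0 m0)
    (x : EuclideanSpace ℝ (Fin d)) (M : ℝ) (hM : 0 ≤ M)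
    (X : ℝ≥0 → Ω → EuclideanSpace ℝ (Fin d))
    (hadapt : Adapted ℱ X)
    (hcont : ∀ ω, Continuous fun t => X t ω)
    (hX0 : ∀ᵐ ω ∂P, X 0 ω = x)
    (τ : ℕ → Ω → ℝ≥0∞)
    (hτ : ∀ n ω, τ n ω = sInf {s : ℝ≥0∞ | ∃ t : ℝ≥0, s = (t : ℝ≥0∞) ∧ (n : ℝ) ≤ ‖X t ω‖})
    (hsuper : ∀ n : ℕ, ‖x‖ < n →
      Supermartingale
        (fun (t : ℝ≥0) (ω : Ω) =>
          Real.exp (-M * ((((t : ℝ≥0∞) ⊓ τ n ω).toNNReal : ℝ))) *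
            (Real.log (1 + ‖X (((t : ℝ≥0∞) ⊓ τ n ω).toNNReal) ω‖ ^ 2) + 1))
        ℱ P) :
    (∀ (t : ℝ≥0) (n : ℕ), ‖x‖ < n →
      P {ω | τ n ω ≤ (t : ℝ≥0∞)} ≤
        ENNReal.ofReal
          (Real.exp (M * t) * (Real.log (1 + ‖x‖ ^ 2) + 1) /
            (Real.log (1 + (n : ℝ) ^ 2) + 1))) ∧
    P {ω | (⨆ n : ℕ, τ n ω) = ∞} = 1 := by
  have hLx_pos : 0 < Real.log (1 + ‖x‖ ^ 2) + 1 := by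
    have := Real.log_nonneg (by nlinarith [sq_nonneg ‖x‖] : (1:ℝ) ≤ 1 + ‖x‖ ^ 2)
    linarith
  have hXmeas : ∀ s : ℝ≥0, Measurable fun ω => X s ω :=
    fun s => (hadapt s).mono (ℱ.le s) le_rfl
  have key : ∀ (t : ℝ≥0) (n : ℕ), ‖x‖ < n →
      P {ω | τ n ω ≤ (t : ℝ≥0∞)} ≤
        ENNReal.ofReal
          (Real.exp (M * t) * (Real.log (1 + ‖x‖ ^ 2) + 1) /
            (Real.log (1 + (n : ℝ) ^ 2) + 1)) := by
    intro t n hn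
    have hsm := hsuper n hn
    set Y : ℝ≥0 → Ω → ℝ := fun (u : ℝ≥0) (ω : Ω) =>
      Real.exp (-M * ((((u : ℝ≥0∞) ⊓ τ n ω).toNNReal : ℝ))) *
        (Real.log (1 + ‖X (((u : ℝ≥0∞) ⊓ τ n ω).toNNReal) ω‖ ^ 2) + 1) with hY
    set A : Set Ω := {ω | τ n ω ≤ (t : ℝ≥0∞)} with hAdef
    set Ln : ℝ := Real.log (1 + (n : ℝ) ^ 2) + 1 with hLn
    set Lx : ℝ := Real.log (1 + ‖x‖ ^ 2) + 1 with hLx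
    set c : ℝ := Real.exp (-(M * t)) * Ln with hc
    have hLn_pos : 0 < Ln := by
      have := Real.log_nonneg (by nlinarith [sq_nonneg ((n:ℝ))] : (1:ℝ) ≤ 1 + (n:ℝ) ^ 2)
      rw [hLn]; linarith
    -- measurability of A
    set F : Ω → ℝ≥0∞ := fun ω => ⨆ q : ℚ, (‖X (min (Real.toNNReal q) t) ω‖₊ : ℝ≥0∞) with hF
    have hFmeas : Measurable F :=
      Measurable.iSup fun q => (hXmeas _).nnnorm.coe_nnreal_ennreal
    have hAeq : A = F ⁻¹' Set.Ici ((n : ℕ) : ℝ≥0∞) := by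
      ext ω
      simp only [hAdef, Set.mem_setOf_eq, Set.mem_preimage, Set.mem_Ici]
      constructor
      · intro hω
        obtain ⟨s, hst, hns, -⟩ := stmt7_hit X ω (hcont ω) n (by rw [← hτ n ω]; exact hω)
        -- rational approximation of s from the right
        obtain ⟨u, humem, hulim⟩ := mem_closure_iff_seq_limit.mp (Rat.denseRange_cast ((s : ℝ)))
        choose q hq using humem
        have h1 : Tendsto (fun k => Real.toNNReal (u k)) atTop (𝓝 s) := by
          have := (continuous_real_toNNReal.tendsto ((s : ℝ))).comp hulim
          rw [Real.toNNReal_coe] at this; exact this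
        have hlim2 : Tendsto (fun k => min (Real.toNNReal (u k)) t) atTop (𝓝 s) := by
          have := h1.min (tendsto_const_nhds : Tendsto (fun _ : ℕ => t) atTop (𝓝 t))
          simpa [min_eq_left hst] using this
        have hlim3 : Tendsto (fun k => (‖X (min (Real.toNNReal (u k)) t) ω‖₊ : ℝ≥0∞))
            atTop (𝓝 ((‖X s ω‖₊ : ℝ≥0∞))) := by
          have hco : Continuous fun y : EuclideanSpace ℝ (Fin d) => (‖y‖₊ : ℝ≥0∞) :=
            ENNReal.continuous_coe.comp continuous_nnnorm
          exact ((hco.tendsto (X s ω)).comp (((hcont ω).tendsto s).comp hlim2))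
        have hle : (‖X s ω‖₊ : ℝ≥0∞) ≤ F ω := by
          refine le_of_tendsto hlim3 (Eventually.of_forall fun k => ?_)
          have h3 := le_iSup (fun q : ℚ => (‖X (min (Real.toNNReal (q : ℝ)) t) ω‖₊ : ℝ≥0∞)) (q k)
          rw [hq k] at h3
          exact h3
        refine le_trans ?_ hle
        have : ((n : ℕ) : ℝ≥0) ≤ ‖X s ω‖₊ := by
          rw [← NNReal.coe_le_coe, coe_nnnorm]
          exact_mod_cast hns
        exact_mod_cast this
      · intro hω
        obtain ⟨s₀, hs₀mem, hs₀max⟩ :=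
          (isCompact_Icc (a := (0:ℝ≥0)) (b := t)).exists_isMaxOn ⟨0, by simp⟩
            ((continuous_norm.comp (hcont ω)).continuousOn
              (s := Set.Icc (0:ℝ≥0) t))
        have hFle : F ω ≤ (‖X s₀ ω‖₊ : ℝ≥0∞) := by
          refine iSup_le fun q => ?_
          have hmem : min (Real.toNNReal q) t ∈ Set.Icc (0:ℝ≥0) t :=
            ⟨zero_le, min_le_right _ _⟩
          have := hs₀max hmem
          rw [ENNReal.coe_le_coe, ← NNReal.coe_le_coe, coe_nnnorm, coe_nnnorm]
          exact this
        have hns : (n : ℝ) ≤ ‖X s₀ ω‖ := by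
          have := le_trans hω hFle
          have h2 : ((n : ℕ) : ℝ≥0) ≤ ‖X s₀ ω‖₊ := by exact_mod_cast this
          rw [← NNReal.coe_le_coe, coe_nnnorm] at h2
          exact_mod_cast h2
        rw [hτ n ω]
        exact le_trans (sInf_le ⟨s₀, rfl, hns⟩) (ENNReal.coe_le_coe.mpr hs₀mem.2)
    have hAmeas : MeasurableSet A := by
      rw [hAeq]; exact hFmeas measurableSet_Ici
    -- integral chain
    have hYt := hsm.integrable t
    have hY0 := hsm.integrable 0
    have hmono : ∫ ω, Y t ω ∂P ≤ ∫ ω, Y 0 ω ∂P := by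
      have h := hsm.setIntegral_le (i := 0) (j := t) (zero_le : (0:ℝ≥0) ≤ t) (MeasurableSet.univ)
      simpa [setIntegral_univ] using h
    have h0 : ∫ ω, Y 0 ω ∂P = Lx := by
      have hae : ∀ᵐ ω ∂P, Y 0 ω = Lx := by
        filter_upwards [hX0] with ω hω
        have h1 : (((0:ℝ≥0) : ℝ≥0∞) ⊓ τ n ω) = 0 := by
          simp only [ENNReal.coe_zero]
          exact inf_eq_left.mpr zero_le
        rw [hY]
        simp [h1, hω, hLx]
      rw [integral_congr_ae hae]
      simp
    have hptle : ∀ ω, A.indicator (fun _ => c) ω ≤ Y t ω := by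
      intro ω
      by_cases hω : ω ∈ A
      · rw [Set.indicator_of_mem hω]
        obtain ⟨s, hst, hns, hsinf⟩ := stmt7_hit X ω (hcont ω) n (by rw [← hτ n ω]; exact hω)
        have hτeq : τ n ω = (s : ℝ≥0∞) := by rw [hτ n ω]; exact hsinf
        have hinf : ((t : ℝ≥0∞) ⊓ τ n ω) = (s : ℝ≥0∞) := by
          rw [hτeq]
          exact inf_eq_right.mpr (ENNReal.coe_le_coe.mpr hst)
        have htoNN : (((t : ℝ≥0∞) ⊓ τ n ω).toNNReal) = s := by rw [hinf]; simp
        rw [hY]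
        simp only [htoNN]
        have hsr : (s : ℝ) ≤ (t : ℝ) := by exact_mod_cast hst
        have h1 : Real.exp (-(M * t)) ≤ Real.exp (-M * (s : ℝ)) := by
          apply Real.exp_le_exp.mpr
          nlinarith
        have h2 : Ln ≤ Real.log (1 + ‖X s ω‖ ^ 2) + 1 := by
          have hn0 : (0:ℝ) ≤ n := n.cast_nonneg
          have hsq : (n : ℝ) ^ 2 ≤ ‖X s ω‖ ^ 2 := by nlinarith
          have hlog : Real.log (1 + (n:ℝ) ^ 2) ≤ Real.log (1 + ‖X s ω‖ ^ 2) := by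
            apply Real.log_le_log (by positivity)
            linarith
          rw [hLn]; linarith
        calc c = Real.exp (-(M * t)) * Ln := rfl
          _ ≤ Real.exp (-M * (s : ℝ)) * (Real.log (1 + ‖X s ω‖ ^ 2) + 1) :=
            mul_le_mul h1 h2 hLn_pos.le (Real.exp_pos _).le
      · rw [Set.indicator_of_notMem hω]
        have hlog : (0:ℝ) ≤ Real.log (1 + ‖X (((t : ℝ≥0∞) ⊓ τ n ω).toNNReal) ω‖ ^ 2) :=
          Real.log_nonneg (by nlinarith [sq_nonneg ‖X (((t : ℝ≥0∞) ⊓ τ n ω).toNNReal) ω‖])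
        show (0:ℝ) ≤ Real.exp (-M * ((((t : ℝ≥0∞) ⊓ τ n ω).toNNReal : ℝ))) *
            (Real.log (1 + ‖X (((t : ℝ≥0∞) ⊓ τ n ω).toNNReal) ω‖ ^ 2) + 1)
        have := Real.exp_pos (-M * ((((t : ℝ≥0∞) ⊓ τ n ω).toNNReal : ℝ)))
        nlinarith
    have hindint : Integrable (A.indicator (fun _ => c)) P :=
      (integrable_const c).indicator hAmeas
    have hchain : c * (P A).toReal ≤ Lx := by
      calc c * (P A).toReal = ∫ ω, A.indicator (fun _ => c) ω ∂P := by
            rw [integral_indicator_const c hAmeas, smul_eq_mul, measureReal_def]; ring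
        _ ≤ ∫ ω, Y t ω ∂P := integral_mono hindint hYt hptle
        _ ≤ ∫ ω, Y 0 ω ∂P := hmono
        _ = Lx := h0
    have hc' : Real.exp (M * t) * c = Ln := by
      rw [hc, Real.exp_neg]
      field_simp
    have hfinal : (P A).toReal ≤ Real.exp (M * t) * Lx / Ln := by
      rw [le_div_iff₀ hLn_pos]
      calc (P A).toReal * Ln = Real.exp (M * t) * (c * (P A).toReal) := by
            rw [← hc']; ring
        _ ≤ Real.exp (M * t) * Lx :=
          mul_le_mul_of_nonneg_left hchain (Real.exp_pos _).le
    calc P A = ENNReal.ofReal ((P A).toReal) := (ENNReal.ofReal_toReal (measure_ne_top P A)).symm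
      _ ≤ ENNReal.ofReal (Real.exp (M * t) * Lx / Ln) := ENNReal.ofReal_le_ofReal hfinal
  refine ⟨key, ?_⟩
  -- non-explosion
  have hsubset : {ω | (⨆ n : ℕ, τ n ω) = ∞}ᶜ ⊆
      ⋃ k : ℕ, ⋂ n : ℕ, {ω | τ n ω ≤ (((k : ℝ≥0)) : ℝ≥0∞)} := by
    intro ω hω
    simp only [Set.mem_compl_iff, Set.mem_setOf_eq] at hω
    obtain ⟨k, hk⟩ := ENNReal.exists_nat_gt hω
    refine Set.mem_iUnion.mpr ⟨k, Set.mem_iInter.mpr fun n => ?_⟩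
    refine le_trans (le_iSup (fun m => τ m ω) n) ?_
    exact_mod_cast hk.le
  have hnull : ∀ k : ℕ, P (⋂ n : ℕ, {ω | τ n ω ≤ (((k : ℝ≥0)) : ℝ≥0∞)}) = 0 := by
    intro k
    refine le_antisymm ?_ zero_le
    have htend : Tendsto (fun n : ℕ =>
        ENNReal.ofReal (Real.exp (M * ((k : ℝ≥0) : ℝ)) * (Real.log (1 + ‖x‖ ^ 2) + 1) /
          (Real.log (1 + (n : ℝ) ^ 2) + 1))) atTop (𝓝 0) := by
      rw [show (0:ℝ≥0∞) = ENNReal.ofReal 0 by simp]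
      apply ENNReal.tendsto_ofReal
      apply Tendsto.div_atTop (tendsto_const_nhds)
      apply tendsto_atTop_add_const_right
      apply Real.tendsto_log_atTop.comp
      apply tendsto_atTop_add_const_left
      exact (tendsto_pow_atTop (two_ne_zero)).comp tendsto_natCast_atTop_atTop
    refine ge_of_tendsto htend ?_
    filter_upwards [eventually_gt_atTop ⌈‖x‖⌉₊] with n hn
    have hxn : ‖x‖ < n := lt_of_le_of_lt (Nat.le_ceil _) (by exact_mod_cast hn)
    exact le_trans (measure_mono (Set.iInter_subset _ n)) (key (k : ℝ≥0) n hxn)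
  have hcomplnull : P {ω | (⨆ n : ℕ, τ n ω) = ∞}ᶜ = 0 :=
    measure_mono_null hsubset (measure_iUnion_null hnull)
  have h1 : (1 : ℝ≥0∞) ≤ P {ω | (⨆ n : ℕ, τ n ω) = ∞} := by
    have h2 := measure_union_le (μ := P)
      {ω | (⨆ n : ℕ, τ n ω) = ∞} {ω | (⨆ n : ℕ, τ n ω) = ∞}ᶜ
    rw [Set.union_compl_self, measure_univ, hcomplnull, add_zero] at h2
    exact h2
  exact le_antisymm prob_le_one h1
end
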